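/- Let x0 ∈ [−√3/4, 0) and let G₂(x) = g₂(x)/h(x) for x ∈ [2x0, 0], where g₂(x) = 4(2x − x0) g(x)^{3/2}, h(x) = ((x − x0)^2 + (4/9) g(x)^4)^{1/2} and g(x) = (9x(2x0 − x)/4)^{1/3}. Then C₉(x0) ≤ G₂(x) ≤ C₁₀(x0) for every x ∈ [2x0, 0], where C₉(x0) = −2^{−19/6} · 3^{2/3} · (√33 + 3)(15 + √33)^{1/2} |x0|^{2/3} and C₁₀(x0) = 2^{−11/6} · 3 · (√33 − 3)(15 − √33)^{1/2} |x0| / (2^{4/3} + 9 |x0|^{2/3})^{1/2}. Moreover g₂ attains its minimum over [2x0, 0] at x₁ = ((7 + √33)/8) x0 and its maximum at x₂ = ((7 − √33)/8) x0. -/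

import Mathlib

open Set
set_option maxHeartbeats 1000000

lemma cube_le {y z : ℝ} (hz : 0 ≤ z) (h : y^3 ≤ z^3) : y ≤ z :=
  le_of_pow_le_pow_left₀ (by norm_num) hz h

lemma cube_eq {y z : ℝ} (hy : 0 ≤ y) (hz : 0 ≤ z) (h : y^3 = z^3) : y = z :=
  le_antisymm (cube_le hz h.le) (cube_le hy h.ge)

lemma sq_le_imp {X Y : ℝ} (hY : 0 ≤ Y) (h : X^2 ≤ Y^2) : X ≤ Y := by nlinarith

lemma quartic (T P : ℝ) : 0 ≤ T^4 - 4*T*P^3 + 3*P^4 := by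
  nlinarith [mul_nonneg (sq_nonneg (T-P)) (sq_nonneg (T+P)), mul_nonneg (sq_nonneg (T-P)) (sq_nonneg P)]

lemma hmono {c T P : ℝ} (hc : 0 ≤ c) (hcT : c*T ≤ 3/4) (hTP : P^3 ≤ T^3) :
    c*T^4 - c*P^4 ≤ T^3 - P^3 := by
  nlinarith [mul_nonneg hc (quartic T P), mul_nonneg (by linarith : (0:ℝ) ≤ 3/4 - c*T) (by linarith : (0:ℝ) ≤ T^3 - P^3)]

lemma claimA {a u r q W : ℝ} (hr : r^2 = 33) (hr5 : 5 ≤ r)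
    (hq : q^2 = 30+2*r) (hq0 : 0 ≤ q) (hW : 0 ≤ W) (hW2 : W^2 = a^2 - u^2) :
    -((r+3)*q*a^2) ≤ 32*(2*u-a)*W := by
  rcases le_or_gt 0 (2*u-a) with hc | hc
  · have h1 : 0 ≤ 32*(2*u-a)*W := by positivity
    nlinarith [mul_nonneg (mul_nonneg (by linarith : (0:ℝ) ≤ r+3) hq0) (sq_nonneg a)]
  · have key : (32*((a-2*u)*W))^2 ≤ ((r+3)*q*a^2)^2 := by
      have id1 : ((r+3)*q*a^2)^2 - (32*((a-2*u)*W))^2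
          = (8*u-(1-r)*a)^2*(8*u-(3+r)*a)^2 + (4*r-4)*((8*u-(1-r)*a)^2*a^2) := by
        linear_combination (128*a^2*u^2 - 128*a^3*u + 23*a^4 - 6*a^4*r - a^4*r^2) * hr
          + (9*a^4 + 6*a^4*r + a^4*r^2) * hq
          + (-4096*u^2 + 4096*a*u - 1024*a^2) * hW2
      nlinarith [mul_nonneg (sq_nonneg (8*u-(1-r)*a)) (sq_nonneg (8*u-(3+r)*a)),
        mul_nonneg (by linarith : (0:ℝ) ≤ 4*r-4) (mul_nonneg (sq_nonneg (8*u-(1-r)*a)) (sq_nonneg a))]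
    have hXY : 32*((a-2*u)*W) ≤ (r+3)*q*a^2 :=
      sq_le_imp (by positivity) key
    nlinarith []

lemma claimB {a u r q' W : ℝ} (hr : r^2 = 33) (hr5 : 5 ≤ r) (hr6 : r ≤ 6)
    (hq : q'^2 = 30-2*r) (hq0 : 0 ≤ q') (ha : 0 ≤ a) (hW : 0 ≤ W) (hW2 : W^2 = a^2 - u^2) :
    32*(2*u-a)*W ≤ (r-3)*q'*a^2 := by
  rcases le_or_gt (2*u-a) 0 with hc | hc
  · have h1 : 32*(2*u-a)*W ≤ 0 := by
      have := mul_nonpos_of_nonpos_of_nonneg (by linarith : 2*u-a ≤ 0) hW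
      nlinarith [this]
    nlinarith [mul_nonneg (mul_nonneg (by linarith : (0:ℝ) ≤ r-3) hq0) (sq_nonneg a)]
  · have key : (32*((2*u-a)*W))^2 ≤ ((r-3)*q'*a^2)^2 := by
      have id1 : ((r-3)*q'*a^2)^2 - (32*((2*u-a)*W))^2
          = 16*((8*u-(1+r)*a)^2*(2*u-a)^2) + (8+8*r)*((8*u-(1+r)*a)^2*((2*u-a)*a))
            + (30-2*r)*((8*u-(1+r)*a)^2*a^2) := by
        linear_combination (192*a^2*u^2 - 144*a^3*u - 16*a^3*u*r + 24*a^4 + 8*a^4*r) * hr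
          + (9*a^4 - 6*a^4*r + a^4*r^2) * hq
          + (-4096*u^2 + 4096*a*u - 1024*a^2) * hW2
      nlinarith [mul_nonneg (sq_nonneg (8*u-(1+r)*a)) (sq_nonneg (2*u-a)),
        mul_nonneg (by linarith : (0:ℝ) ≤ 8+8*r) (mul_nonneg (sq_nonneg (8*u-(1+r)*a)) (mul_nonneg (by linarith : (0:ℝ) ≤ 2*u-a) ha)),
        mul_nonneg (by linarith : (0:ℝ) ≤ 30-2*r) (mul_nonneg (sq_nonneg (8*u-(1+r)*a)) (sq_nonneg a))]
    have hXY : 32*((2*u-a)*W) ≤ (r-3)*q'*a^2 :=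
      sq_le_imp (mul_nonneg (mul_nonneg (by linarith : (0:ℝ) ≤ r-3) hq0) (sq_nonneg a)) key
    linarith [hXY]

lemma constC9 (e2 e3 t q r : ℝ) (he2 : 0 < e2) (he3 : 0 < e3) (he26 : e2^6=2)
    (he33 : e3^3=3) (ht : 0 < t) :
    -(e2^19)⁻¹ * e3^2 * (r+3) * (q/e2^3) * t^2 = (-(3/16*((r+3)*q*t^6)))/(e3*t^4/e2^2) := by
  have h24 : e2^24 = 16 := by
    calc e2^24 = (e2^6)^4 := by ring
      _ = 16 := by rw [he26]; norm_num
  have hne2 : e2 ≠ 0 := ne_of_gt he2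
  have hne3 : e3 ≠ 0 := ne_of_gt he3
  have hnt : t ≠ 0 := ne_of_gt ht
  field_simp
  linear_combination (3*(r+3)*q) * h24 + (-16*(r+3)*q) * he33

lemma constC10 (e2 t q r d : ℝ) (he2 : 0 < e2) (he26 : e2^6=2)
    (ht : 0 < t) (hd : 0 < d) :
    (e2^11)⁻¹*3*(r-3)*(q/e2^3)*t^3 / d = (3/16*((r-3)*q*t^6))/(t^3*d/e2^10) := by
  have h24 : e2^24 = 16 := by
    calc e2^24 = (e2^6)^4 := by ring
      _ = 16 := by rw [he26]; norm_num
  have hne2 : e2 ≠ 0 := ne_of_gt he2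
  have hnt : t ≠ 0 := ne_of_gt ht
  have hnd : d ≠ 0 := ne_of_gt hd
  field_simp
  linear_combination (-(r-3)*q) * h24

/-- Corollary 4.8 i: for `x0 ∈ [-√3/4, 0)` the function
`G₂ = g₂/h`, with `g₂(x) = 4(2x - x0) g(x)^(3/2)`, satisfies
`C₉(x0) ≤ G₂(x) ≤ C₁₀(x0)` on `[2x0, 0]`; moreover `g₂` attains its minimum
at `x₁ = ((7 + √33)/8) x0` and its maximum at `x₂ = ((7 - √33)/8) x0`. -/
theorem G2_bounds_small_x0
    (x0 : ℝ) (hx0l : -Real.sqrt 3 / 4 ≤ x0) (hx0 : x0 < 0)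
    (g h g2 G2 : ℝ → ℝ)
    (hg : ∀ x : ℝ, g x = (9 * x * (2 * x0 - x) / 4) ^ ((1 : ℝ) / 3))
    (hh : ∀ x : ℝ, h x = ((x - x0) ^ 2 + (4 / 9) * (g x) ^ 4) ^ ((1 : ℝ) / 2))
    (hg2 : ∀ x : ℝ, g2 x = 4 * (2 * x - x0) * (g x) ^ ((3 : ℝ) / 2))
    (hG2 : ∀ x : ℝ, G2 x = g2 x / h x)
    (x1 x2 : ℝ)
    (hx1 : x1 = (7 + Real.sqrt 33) / 8 * x0)
    (hx2 : x2 = (7 - Real.sqrt 33) / 8 * x0) :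
    (∀ x ∈ Icc (2 * x0) 0, g2 x1 ≤ g2 x ∧ g2 x ≤ g2 x2) ∧
    ∀ x ∈ Icc (2 * x0) 0,
      -(2 : ℝ) ^ (-(19 : ℝ) / 6) * 3 ^ ((2 : ℝ) / 3) * (Real.sqrt 33 + 3) *
          (15 + Real.sqrt 33) ^ ((1 : ℝ) / 2) * |x0| ^ ((2 : ℝ) / 3) ≤ G2 x ∧
      G2 x ≤ (2 : ℝ) ^ (-(11 : ℝ) / 6) * 3 * (Real.sqrt 33 - 3) *
          (15 - Real.sqrt 33) ^ ((1 : ℝ) / 2) * |x0| /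
          (2 ^ ((4 : ℝ) / 3) + 9 * |x0| ^ ((2 : ℝ) / 3)) ^ ((1 : ℝ) / 2) := by
  obtain ⟨r, hrdef⟩ : ∃ y : ℝ, y = Real.sqrt 33 := ⟨_, rfl⟩
  rw [← hrdef] at hx1 hx2 ⊢
  have hr2 : r^2 = 33 := by rw [hrdef]; exact Real.sq_sqrt (by norm_num)
  have hr0 : 0 ≤ r := hrdef ▸ Real.sqrt_nonneg _
  have hr5 : 5 ≤ r := by nlinarith [hr2, hr0]
  have hr6 : r ≤ 6 := by nlinarith [hr2, hr0]
  obtain ⟨a, hadef⟩ : ∃ y : ℝ, y = -x0 := ⟨_, rfl⟩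
  have ha : 0 < a := by rw [hadef]; linarith
  have habs' : x0 = -a := by rw [hadef]; ring
  have habs : |x0| = a := by rw [abs_of_neg hx0, hadef]
  have haa : a^2 ≤ 3/16 := by
    have h3 : Real.sqrt 3 ^ 2 = 3 := Real.sq_sqrt (by norm_num)
    have h30 : 0 ≤ Real.sqrt 3 := Real.sqrt_nonneg _
    have hle : a ≤ Real.sqrt 3 / 4 := by rw [hadef]; linarith
    have := mul_self_le_mul_self ha.le hle
    nlinarith [this, h3]
  obtain ⟨q, hqdef⟩ : ∃ y : ℝ, y = Real.sqrt (30 + 2*r) := ⟨_, rfl⟩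
  have hq2 : q^2 = 30 + 2*r := by rw [hqdef]; exact Real.sq_sqrt (by linarith)
  have hq0 : 0 ≤ q := hqdef ▸ Real.sqrt_nonneg _
  obtain ⟨q', hq'def⟩ : ∃ y : ℝ, y = Real.sqrt (30 - 2*r) := ⟨_, rfl⟩
  have hq'2 : q'^2 = 30 - 2*r := by rw [hq'def]; exact Real.sq_sqrt (by linarith)
  have hq'0 : 0 ≤ q' := hq'def ▸ Real.sqrt_nonneg _
  obtain ⟨t, htdef⟩ : ∃ y : ℝ, y = a ^ ((1:ℝ)/3) := ⟨_, rfl⟩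
  have ht0 : 0 < t := htdef ▸ Real.rpow_pos_of_pos ha _
  have ht3 : t^3 = a := by
    rw [htdef, ← Real.rpow_natCast (a ^ ((1:ℝ)/3)) 3, ← Real.rpow_mul ha.le]; norm_num
  obtain ⟨e2, he2def⟩ : ∃ y : ℝ, y = (2:ℝ) ^ ((1:ℝ)/6) := ⟨_, rfl⟩
  have he20 : 0 < e2 := he2def ▸ Real.rpow_pos_of_pos (by norm_num) _
  have he26 : e2^6 = 2 := by
    rw [he2def, ← Real.rpow_natCast ((2:ℝ) ^ ((1:ℝ)/6)) 6, ← Real.rpow_mul (by norm_num)]; norm_num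
  obtain ⟨e3, he3def⟩ : ∃ y : ℝ, y = (3:ℝ) ^ ((1:ℝ)/3) := ⟨_, rfl⟩
  have he30 : 0 < e3 := he3def ▸ Real.rpow_pos_of_pos (by norm_num) _
  have he33 : e3^3 = 3 := by
    rw [he3def, ← Real.rpow_natCast ((3:ℝ) ^ ((1:ℝ)/3)) 3, ← Real.rpow_mul (by norm_num)]; norm_num
  obtain ⟨c3, hc3def⟩ : ∃ y : ℝ, y = ((9:ℝ)/4) ^ ((1:ℝ)/3) := ⟨_, rfl⟩
  have hc30 : 0 < c3 := hc3def ▸ Real.rpow_pos_of_pos (by norm_num) _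
  have hc33 : c3^3 = 9/4 := by
    rw [hc3def, ← Real.rpow_natCast (((9:ℝ)/4) ^ ((1:ℝ)/3)) 3, ← Real.rpow_mul (by norm_num)]; norm_num
  have hpnn : ∀ x, 2*x0 ≤ x → x ≤ 0 → 0 ≤ x*(2*x0 - x) := by
    intro x hxl hxr
    linarith [mul_nonneg (neg_nonneg.mpr hxr) (neg_nonneg.mpr (show 2*x0-x ≤ 0 by linarith))]
  -- formulas for g2 and h on the interval
  have hg2form : ∀ x, 2*x0 ≤ x → x ≤ 0 →
      g2 x = 6*(2*x - x0) * Real.sqrt (x*(2*x0 - x)) := by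
    intro x hxl hxr
    have hp : 0 ≤ x*(2*x0 - x) := hpnn x hxl hxr
    have harg : 9*x*(2*x0 - x)/4 = 9*(x*(2*x0-x))/4 := by ring
    rw [hg2 x, hg x, harg, ← Real.rpow_mul (by linarith)]
    rw [show (1:ℝ)/3 * (3/2) = 1/2 by norm_num, ← Real.sqrt_eq_rpow]
    rw [show 9*(x*(2*x0-x))/4 = (3/2)^2 * (x*(2*x0-x)) by ring,
      Real.sqrt_mul (by positivity), Real.sqrt_sq (by norm_num)]
    ring
  have hpval : ∀ x, x*(2*x0-x) = a^2 - (x-x0)^2 := by intro x; rw [hadef]; ring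
  -- values at x1 and x2
  have hx1mem : 2*x0 ≤ x1 ∧ x1 ≤ 0 := by
    have k1 := mul_nonneg (show (0:ℝ) ≤ 9 - r by linarith) (show (0:ℝ) ≤ -x0 by linarith)
    have k2 := mul_nonneg (show (0:ℝ) ≤ 7 + r by linarith) (show (0:ℝ) ≤ -x0 by linarith)
    constructor
    · rw [hx1]; linarith
    · rw [hx1]; linarith
  have hx2mem : 2*x0 ≤ x2 ∧ x2 ≤ 0 := by
    have k1 := mul_nonneg (show (0:ℝ) ≤ 9 + r by linarith) (show (0:ℝ) ≤ -x0 by linarith)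
    have k2 := mul_nonneg (show (0:ℝ) ≤ 7 - r by linarith) (show (0:ℝ) ≤ -x0 by linarith)
    constructor
    · rw [hx2]; linarith
    · rw [hx2]; linarith
  have hg2x1 : g2 x1 = -(3/16*((r+3)*q*a^2)) := by
    rw [hg2form x1 hx1mem.1 hx1mem.2]
    have hp1 : x1*(2*x0 - x1) = (q*a/8)^2 := by
      rw [hx1, hadef]; linear_combination (-(x0^2/64)) * hq2 + (-(x0^2/64)) * hr2
    rw [hp1, Real.sqrt_sq (by positivity)]
    rw [hx1, hadef]; ring
  have hg2x2 : g2 x2 = 3/16*((r-3)*q'*a^2) := by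
    rw [hg2form x2 hx2mem.1 hx2mem.2]
    have hp2 : x2*(2*x0 - x2) = (q'*a/8)^2 := by
      rw [hx2, hadef]; linear_combination (-(x0^2/64)) * hq'2 + (-(x0^2/64)) * hr2
    rw [hp2, Real.sqrt_sq (by positivity)]
    rw [hx2, hadef]; ring
  -- Part 1
  have part1 : ∀ x ∈ Icc (2*x0) 0, g2 x1 ≤ g2 x ∧ g2 x ≤ g2 x2 := by
    intro x hx
    obtain ⟨hxl, hxr⟩ := hx
    have hp : 0 ≤ x*(2*x0 - x) := hpnn x hxl hxr
    have hW0 : 0 ≤ Real.sqrt (x*(2*x0-x)) := Real.sqrt_nonneg _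
    have hW2 : Real.sqrt (x*(2*x0-x))^2 = a^2 - (x-x0)^2 := by
      rw [Real.sq_sqrt hp, hpval]
    have hform : g2 x = 3/16 * (32*(2*(x-x0)-a)*Real.sqrt (x*(2*x0-x))) := by
      rw [hg2form x hxl hxr, hadef]; ring
    constructor
    · rw [hg2x1, hform]
      have := claimA hr2 hr5 hq2 hq0 hW0 hW2
      linarith
    · rw [hg2x2, hform]
      have := claimB hr2 hr5 hr6 hq'2 hq'0 ha.le hW0 hW2
      linarith
  refine ⟨part1, ?_⟩
  -- h formula
  have hhform : ∀ x, 2*x0 ≤ x → x ≤ 0 →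
      h x = Real.sqrt ((x-x0)^2 + c3 * ((x*(2*x0-x)) ^ ((1:ℝ)/3))^4) := by
    intro x hxl hxr
    have hp : 0 ≤ x*(2*x0 - x) := hpnn x hxl hxr
    have hgx : g x = c3 * (x*(2*x0-x)) ^ ((1:ℝ)/3) := by
      rw [hg x, show 9*x*(2*x0-x)/4 = (9/4)*(x*(2*x0-x)) by ring,
        Real.mul_rpow (by norm_num) hp, ← hc3def]
    have h4 : (4:ℝ)/9 * (g x)^4 = c3 * ((x*(2*x0-x)) ^ ((1:ℝ)/3))^4 := by
      rw [hgx]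
      linear_combination ((4:ℝ)/9*c3*(((x*(2*x0-x)) ^ ((1:ℝ)/3))^4)) * hc33
    rw [hh x, h4, Real.sqrt_eq_rpow]
  have hcT : c3 * t^2 ≤ 3/4 := by
    apply cube_le (by norm_num)
    have h1 : (c3*t^2)^3 = 9/4 * a^2 := by
      calc (c3*t^2)^3 = c3^3 * (t^3)^2 := by ring
        _ = 9/4 * a^2 := by rw [hc33, ht3]
    rw [h1]; linarith [haa]
  -- lower bound for h x, globally
  have hh00 : (0:ℝ) < e3 * t^4 / e2^2 := by positivity
  have hc3e : c3 * e2^4 = e3^2 := by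
    apply cube_eq (by positivity) (by positivity)
    calc (c3*e2^4)^3 = c3^3 * (e2^6)^2 := by ring
      _ = (e3^2)^3 := by rw [hc33, he26]; linear_combination (-(e3^3+3)) * he33
  have hhlow : ∀ x, 2*x0 ≤ x → x ≤ 0 → e3 * t^4 / e2^2 ≤ h x := by
    intro x hxl hxr
    rw [hhform x hxl hxr]
    have hp : 0 ≤ x*(2*x0 - x) := hpnn x hxl hxr
    obtain ⟨P, hPdef⟩ : ∃ y : ℝ, y = (x*(2*x0-x)) ^ ((1:ℝ)/3) := ⟨_, rfl⟩
    rw [← hPdef]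
    have hP0 : 0 ≤ P := hPdef ▸ Real.rpow_nonneg hp _
    have hP3 : P^3 = x*(2*x0-x) := by
      rw [hPdef, ← Real.rpow_natCast ((x*(2*x0-x)) ^ ((1:ℝ)/3)) 3, ← Real.rpow_mul hp]; norm_num
    have hPT : P^3 ≤ (t^2)^3 := by
      rw [hP3, show (t^2)^3 = (t^3)^2 by ring, ht3, hpval]
      linarith [sq_nonneg (x - x0)]
    have hkey := hmono hc30.le hcT hPT
    have hlow2 : (e3 * t^4 / e2^2)^2 ≤ (x-x0)^2 + c3*P^4 := by
      have hh02 : (e3 * t^4 / e2^2)^2 = c3 * (t^2)^4 := by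
        field_simp
        linear_combination (-1) * hc3e
      have hu2 : (x-x0)^2 = (t^2)^3 - P^3 := by
        rw [show (t^2)^3 = (t^3)^2 by ring, ht3, hP3, hpval x]; ring
      rw [hh02, hu2]; linarith [hkey]
    calc e3 * t^4 / e2^2 = Real.sqrt ((e3 * t^4 / e2^2)^2) := (Real.sqrt_sq hh00.le).symm
      _ ≤ _ := Real.sqrt_le_sqrt hlow2
  have hhpos : ∀ x, 2*x0 ≤ x → x ≤ 0 → 0 < h x := fun x hxl hxr =>
    lt_of_lt_of_le hh00 (hhlow x hxl hxr)
  -- conversions of statement constants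
  have habs23 : |x0| ^ ((2:ℝ)/3) = t^2 := by
    rw [habs, htdef, ← Real.rpow_natCast (a ^ ((1:ℝ)/3)) 2, ← Real.rpow_mul ha.le]; norm_num
  have he2_19 : (2:ℝ) ^ (-(19:ℝ)/6) = (e2^19)⁻¹ := by
    rw [he2def, ← Real.rpow_natCast ((2:ℝ) ^ ((1:ℝ)/6)) 19, ← Real.rpow_mul (by norm_num),
      show -(19:ℝ)/6 = -(19/6) by norm_num, Real.rpow_neg (by norm_num)]
    norm_num
  have he2_11 : (2:ℝ) ^ (-(11:ℝ)/6) = (e2^11)⁻¹ := by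
    rw [he2def, ← Real.rpow_natCast ((2:ℝ) ^ ((1:ℝ)/6)) 11, ← Real.rpow_mul (by norm_num),
      show -(11:ℝ)/6 = -(11/6) by norm_num, Real.rpow_neg (by norm_num)]
    norm_num
  have he2_43 : (2:ℝ) ^ ((4:ℝ)/3) = e2^8 := by
    rw [he2def, ← Real.rpow_natCast ((2:ℝ) ^ ((1:ℝ)/6)) 8, ← Real.rpow_mul (by norm_num)]
    norm_num
  have he3_23 : (3:ℝ) ^ ((2:ℝ)/3) = e3^2 := by
    rw [he3def, ← Real.rpow_natCast ((3:ℝ) ^ ((1:ℝ)/3)) 2, ← Real.rpow_mul (by norm_num)]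
    norm_num
  have hsqrt2 : Real.sqrt 2 = e2^3 := by
    rw [show (2:ℝ) = (e2^3)^2 by rw [show (e2^3)^2 = e2^6 by ring, he26]]
    rw [Real.sqrt_sq (by positivity)]
  have h15p : (15 + r) ^ ((1:ℝ)/2) = q / e2^3 := by
    rw [← Real.sqrt_eq_rpow, hqdef, show (30:ℝ) + 2*r = 2*(15+r) by ring,
      Real.sqrt_mul (by norm_num), hsqrt2]
    field_simp
  have h15m : (15 - r) ^ ((1:ℝ)/2) = q' / e2^3 := by
    rw [← Real.sqrt_eq_rpow, hq'def, show (30:ℝ) - 2*r = 2*(15-r) by ring,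
      Real.sqrt_mul (by norm_num), hsqrt2]
    field_simp
  intro x hx
  obtain ⟨hxl, hxr⟩ := hx
  have hxpos := hhpos x hxl hxr
  have hg2bnd := part1 x ⟨hxl, hxr⟩
  have hG2x : G2 x = g2 x / h x := hG2 x
  constructor
  · -- lower bound
    have hC9 : -(2:ℝ) ^ (-(19:ℝ)/6) * 3 ^ ((2:ℝ)/3) * (r + 3) *
          (15 + r) ^ ((1:ℝ)/2) * |x0| ^ ((2:ℝ)/3) = g2 x1 / (e3 * t^4 / e2^2) := by
      rw [he2_19, he3_23, h15p, habs23, hg2x1, show a = t^3 from ht3.symm]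
      linear_combination constC9 e2 e3 t q r he20 he30 he26 he33 ht0
    rw [hG2x, hC9]
    have hg2x1neg : g2 x1 ≤ 0 := by
      rw [hg2x1]
      have h1 : 0 ≤ (r+3)*q*a^2 := by positivity
      linarith
    have step1 : g2 x1 / (e3 * t^4 / e2^2) ≤ g2 x1 / h x := by
      rw [div_le_div_iff₀ hh00 hxpos]
      linarith [mul_nonpos_of_nonpos_of_nonneg hg2x1neg
        (sub_nonneg.2 (hhlow x hxl hxr))]
    have step2 : g2 x1 / h x ≤ g2 x / h x := (div_le_div_iff_of_pos_right hxpos).2 hg2bnd.1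
    linarith
  · -- upper bound
    have hC10pos : 0 ≤ (2:ℝ) ^ (-(11:ℝ)/6) * 3 * (r - 3) * (15 - r) ^ ((1:ℝ)/2) * |x0| /
        (2 ^ ((4:ℝ)/3) + 9 * |x0| ^ ((2:ℝ)/3)) ^ ((1:ℝ)/2) := by
      apply div_nonneg
      · have h1 : (0:ℝ) ≤ (2:ℝ) ^ (-(11:ℝ)/6) := Real.rpow_nonneg (by norm_num) _
        have h2 : (0:ℝ) ≤ (15 - r) ^ ((1:ℝ)/2) := Real.rpow_nonneg (by linarith) _
        have h3 : (0:ℝ) ≤ |x0| := abs_nonneg _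
        have h4 : (0:ℝ) ≤ r - 3 := by linarith
        positivity
      · exact Real.rpow_nonneg (by positivity) _
    rcases le_or_gt (g2 x) 0 with hgle | hggt
    · rw [hG2x]
      have : g2 x / h x ≤ 0 := div_nonpos_of_nonpos_of_nonneg hgle hxpos.le
      linarith
    · -- positive case
      obtain ⟨d, hddef⟩ : ∃ y : ℝ, y = Real.sqrt (e2^8 + 9*t^2) := ⟨_, rfl⟩
      have hd0 : 0 < d := by rw [hddef]; exact Real.sqrt_pos.2 (by positivity)
      have hd2 : d^2 = e2^8 + 9*t^2 := by rw [hddef]; exact Real.sq_sqrt (by positivity)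
      have hHpos : (0:ℝ) < t^3*d/e2^10 := by positivity
      -- show h x ≥ t^3*d/e2^10 using g2 x > 0 (so x - x0 > a/2)
      have hHle : t^3*d/e2^10 ≤ h x := by
        rw [hhform x hxl hxr]
        have hp : 0 ≤ x*(2*x0 - x) := hpnn x hxl hxr
        have hu : a/2 < x - x0 := by
          by_contra hcon
          push_neg at hcon
          have hform : g2 x = 6*(2*(x-x0)-a) * Real.sqrt (x*(2*x0-x)) := by
            rw [hg2form x hxl hxr, hadef]; ring
          have : g2 x ≤ 0 := by
            rw [hform]
            apply mul_nonpos_of_nonpos_of_nonneg (by linarith) (Real.sqrt_nonneg _)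
          linarith
        obtain ⟨P, hPdef⟩ : ∃ y : ℝ, y = (x*(2*x0-x)) ^ ((1:ℝ)/3) := ⟨_, rfl⟩
        rw [← hPdef]
        have hP0 : 0 ≤ P := hPdef ▸ Real.rpow_nonneg hp _
        have hP3 : P^3 = x*(2*x0-x) := by
          rw [hPdef, ← Real.rpow_natCast ((x*(2*x0-x)) ^ ((1:ℝ)/3)) 3, ← Real.rpow_mul hp]; norm_num
        obtain ⟨A13, hAdef⟩ : ∃ y : ℝ, y = (3*a^2/4) ^ ((1:ℝ)/3) := ⟨_, rfl⟩
        have hA0 : 0 ≤ A13 := hAdef ▸ Real.rpow_nonneg (by positivity) _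
        have hA3 : A13^3 = 3*a^2/4 := by
          rw [hAdef, ← Real.rpow_natCast ((3*a^2/4) ^ ((1:ℝ)/3)) 3, ← Real.rpow_mul (by positivity)]; norm_num
        have hPA : P^3 ≤ A13^3 := by
          rw [hP3, hA3, hpval]
          linarith [mul_self_le_mul_self (by linarith : (0:ℝ) ≤ a/2) hu.le]
        have hcA : c3 * A13 ≤ 3/4 := by
          apply cube_le (by norm_num)
          have h1 : (c3*A13)^3 = 9/4*(3*a^2/4) := by
            calc (c3*A13)^3 = c3^3 * A13^3 := by ring
              _ = 9/4*(3*a^2/4) := by rw [hc33, hA3]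
          rw [h1]; linarith [haa]
        have hkey := hmono hc30.le hcA hPA
        have hcA4 : c3 * A13^4 = 9*t^8/e2^20 := by
          apply cube_eq (by positivity) (by positivity)
          have e260 : (e2^20)^3 = 1024 := by
            calc (e2^20)^3 = (e2^6)^10 := by ring
              _ = 1024 := by rw [he26]; norm_num
          have ht8 : (t^8)^3 = a^8 := by
            calc (t^8)^3 = (t^3)^8 := by ring
              _ = a^8 := by rw [ht3]
          have : (9*t^8/e2^20)^3 = 729*a^8/1024 := by
            rw [div_pow, show (9*t^8)^3 = 729*(t^8)^3 by ring, ht8, e260]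
          rw [this]
          calc (c3*A13^4)^3 = c3^3 * (A13^3)^4 := by ring
            _ = 729*a^8/1024 := by rw [hc33, hA3]; ring
        have hlow2 : (t^3*d/e2^10)^2 ≤ (x-x0)^2 + c3*P^4 := by
          have hH2 : (t^3*d/e2^10)^2 = a^2/4 + 9*t^8/e2^20 := by
            have he212 : e2^12 = 4 := by
              calc e2^12 = (e2^6)^2 := by ring
                _ = 4 := by rw [he26]; norm_num
            rw [← ht3]
            field_simp
            linear_combination 4 * hd2 + (-(e2^8)) * he212
          have hu2 : (x-x0)^2 - a^2/4 = A13^3 - P^3 := by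
            rw [hA3, hP3, hpval x]; ring
          rw [hH2, ← hcA4]
          linarith [hkey, hu2]
        calc t^3*d/e2^10 = Real.sqrt ((t^3*d/e2^10)^2) := (Real.sqrt_sq hHpos.le).symm
          _ ≤ _ := Real.sqrt_le_sqrt hlow2
      -- conclude
      have hC10 : (2:ℝ) ^ (-(11:ℝ)/6) * 3 * (r - 3) * (15 - r) ^ ((1:ℝ)/2) * |x0| /
          (2 ^ ((4:ℝ)/3) + 9 * |x0| ^ ((2:ℝ)/3)) ^ ((1:ℝ)/2)
          = g2 x2 / (t^3*d/e2^10) := by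
        rw [he2_11, h15m, habs23, habs, hg2x2, show a = t^3 from ht3.symm, he2_43,
          ← Real.sqrt_eq_rpow, ← hddef]
        linear_combination constC10 e2 t q' r d he20 he26 ht0 hd0
      rw [hG2x, hC10]
      have hg2x2pos : 0 ≤ g2 x2 := by
        rw [hg2x2]
        have h4 : (0:ℝ) ≤ r - 3 := by linarith
        positivity
      have step1 : g2 x / h x ≤ g2 x2 / h x := (div_le_div_iff_of_pos_right hxpos).2 hg2bnd.2
      have step2 : g2 x2 / h x ≤ g2 x2 / (t^3*d/e2^10) := by
        rw [div_le_div_iff₀ hxpos hHpos]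
        linarith [mul_nonneg hg2x2pos (sub_nonneg.2 hHle)]
      linarith
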